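/- Let n ≥ 3 and let β ≤ 1/(2n²) and A > 0. Suppose u : [0,T) → [0,∞) is differentiable and satisfies, for all t, u'(t) ≤ c₁·(u(t)·Q(t))^{(n-2)/n}·u(t)^{2/n} − c₂·Q(t)^{(n-2)/n} + L·u(t), where Q(t) ≥ 0, c₁ = (n/2)·6.5, c₂ = (n/2)·15/(A²n²), L ≥ 0, and suppose u(0) ≤ 2/(n²A²). If in addition n²A²·u(t) ≤ 15/6.5 whenever u(t) ≤ 2·u(0)·e^{Lt}, then u(t) ≤ u(0)·e^{Lt} for all t ∈ [0,T) (i.e., the bracketed term is nonpositive whenever u is below the barrier, so u'≤ Lu persists). -/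

import Mathlib

open Set Real

/-- the barrier argument preserving the small-energy condition
along the local Ricci flow.  With `c₁ = (n/2)·6.5`, `c₂ = (n/2)·15/(A²n²)`,
if `u' ≤ c₁ (u·Q)^{(n-2)/n} u^{2/n} − c₂ Q^{(n-2)/n} + L·u`, `u(0) ≤ 2/(n²A²)`,
and `n²A²·u(t) ≤ 15/6.5` whenever `u(t) ≤ 2·u(0)·e^{Lt}`, then
`u(t) ≤ u(0)·e^{Lt}` on `[0,T)`. -/
theorem stmt17 (n : ℕ) (hn : 3 ≤ n) (β A L T : ℝ)
    (hβ : β ≤ 1 / (2 * n ^ 2)) (hA : 0 < A) (hL : 0 ≤ L)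
    (u u' Q : ℝ → ℝ)
    (hu0 : ∀ t ∈ Set.Ico (0:ℝ) T, 0 ≤ u t)
    (hQ0 : ∀ t ∈ Set.Ico (0:ℝ) T, 0 ≤ Q t)
    (hderiv : ∀ t ∈ Set.Ico (0:ℝ) T, HasDerivAt u (u' t) t)
    (hineq : ∀ t ∈ Set.Ico (0:ℝ) T,
      u' t ≤ ((n:ℝ) / 2) * 6.5 * (u t * Q t) ^ (((n:ℝ) - 2) / n) * (u t) ^ ((2:ℝ) / n)
        - ((n:ℝ) / 2) * (15 / (A ^ 2 * n ^ 2)) * (Q t) ^ (((n:ℝ) - 2) / n)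
        + L * u t)
    (hinit : u 0 ≤ 2 / (n ^ 2 * A ^ 2))
    (hbarrier : ∀ t ∈ Set.Ico (0:ℝ) T,
      u t ≤ 2 * u 0 * Real.exp (L * t) → (n:ℝ) ^ 2 * A ^ 2 * u t ≤ 15 / 6.5) :
    ∀ t ∈ Set.Ico (0:ℝ) T, u t ≤ u 0 * Real.exp (L * t) := by
  have hn0 : (0:ℝ) < (n:ℝ) := by
    have : (3:ℝ) ≤ (n:ℝ) := by exact_mod_cast hn
    linarith
  have hnA : (0:ℝ) < (n:ℝ)^2 * A^2 := by positivity
  -- Key: smallness implies linear differential inequality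
  have key : ∀ s ∈ Set.Ico (0:ℝ) T, (n:ℝ)^2 * A^2 * u s ≤ 15/6.5 → u' s ≤ L * u s := by
    intro s hs hsmall
    have hu := hu0 s hs
    have hq := hQ0 s hs
    have hQp : (0:ℝ) ≤ Q s ^ (((n:ℝ)-2)/n) := Real.rpow_nonneg hq _
    have e1 : (u s * Q s) ^ (((n:ℝ)-2)/(n:ℝ)) = u s ^ (((n:ℝ)-2)/(n:ℝ)) * Q s ^ (((n:ℝ)-2)/(n:ℝ)) :=
      Real.mul_rpow hu hq
    have hsum : ((n:ℝ)-2)/(n:ℝ) + 2/(n:ℝ) = 1 := by field_simp; ring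
    have e2 : u s ^ (((n:ℝ)-2)/(n:ℝ)) * u s ^ ((2:ℝ)/(n:ℝ)) = u s := by
      rw [← Real.rpow_add' hu (by rw [hsum]; norm_num), hsum, Real.rpow_one]
    have h1 := hineq s hs
    rw [e1] at h1
    have h2 : ((n:ℝ)/2) * 6.5 * (u s ^ (((n:ℝ)-2)/(n:ℝ)) * Q s ^ (((n:ℝ)-2)/(n:ℝ))) * u s ^ ((2:ℝ)/(n:ℝ))
        = ((n:ℝ)/2) * 6.5 * (u s * Q s ^ (((n:ℝ)-2)/(n:ℝ))) := by
      calc ((n:ℝ)/2) * 6.5 * (u s ^ (((n:ℝ)-2)/(n:ℝ)) * Q s ^ (((n:ℝ)-2)/(n:ℝ))) * u s ^ ((2:ℝ)/(n:ℝ))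
          = ((n:ℝ)/2) * 6.5 * Q s ^ (((n:ℝ)-2)/(n:ℝ)) * (u s ^ (((n:ℝ)-2)/(n:ℝ)) * u s ^ ((2:ℝ)/(n:ℝ))) := by
            ring
        _ = ((n:ℝ)/2) * 6.5 * (u s * Q s ^ (((n:ℝ)-2)/(n:ℝ))) := by rw [e2]; ring
    rw [h2] at h1
    have hd : 6.5 * u s ≤ 15 / (A^2 * (n:ℝ)^2) := by
      rw [le_div_iff₀ (by positivity)]
      nlinarith
    have h3 : ((n:ℝ)/2) * 6.5 * (u s * Q s ^ (((n:ℝ)-2)/(n:ℝ)))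
        ≤ ((n:ℝ)/2) * (15 / (A^2 * (n:ℝ)^2)) * Q s ^ (((n:ℝ)-2)/(n:ℝ)) := by
      have hmul := mul_le_mul_of_nonneg_right hd hQp
      have hmul2 := mul_le_mul_of_nonneg_left hmul (by positivity : (0:ℝ) ≤ (n:ℝ)/2)
      nlinarith [hmul2]
    linarith
  intro t ht
  have h0T : (0:ℝ) < T := lt_of_le_of_lt ht.1 ht.2
  set g : ℝ → ℝ := fun s => u s * Real.exp (-(L * s)) with hgdef
  have hgderiv : ∀ s ∈ Set.Ico (0:ℝ) T,
      HasDerivAt g ((u' s - L * u s) * Real.exp (-(L*s))) s := by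
    intro s hs
    have h2 : HasDerivAt (fun x : ℝ => -(L*x)) (-L) s := by
      have h := ((hasDerivAt_id' s).const_mul L).neg
      simp only [mul_one] at h
      exact h
    have h1 : HasDerivAt (fun x : ℝ => Real.exp (-(L*x))) (Real.exp (-(L*s)) * (-L)) s := h2.exp
    have : HasDerivAt (fun y => u y * Real.exp (-(L*y))) (u' s * Real.exp (-(L*s)) + u s * (Real.exp (-(L*s)) * -L)) s := (hderiv s hs).mul h1
    convert this using 1
    ring
  have hgc : ContinuousOn g (Set.Icc 0 t) := by
    intro s hs
    exact ((hgderiv s ⟨hs.1, lt_of_le_of_lt hs.2 ht.2⟩).continuousAt).continuousWithinAt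
  have hg0 : g 0 = u 0 := by simp [hgdef]
  have hu00 : 0 ≤ u 0 := hu0 0 ⟨le_rfl, h0T⟩
  set δ : ℝ := if u 0 = 0 then (15 / (6.5 * ((n:ℝ)^2 * A^2))) * Real.exp (-(L*t)) else 2 * u 0
    with hδdef
  have hδpos : u 0 < δ := by
    by_cases h : u 0 = 0
    · rw [hδdef, if_pos h, h]; positivity
    · rw [hδdef, if_neg h]
      have : 0 < u 0 := lt_of_le_of_ne hu00 (Ne.symm h)
      linarith
  have hδsmall : ∀ s ∈ Set.Icc (0:ℝ) t, g s ≤ δ → u' s ≤ L * u s := by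
    intro s hs hgs
    have hsT : s ∈ Set.Ico (0:ℝ) T := ⟨hs.1, lt_of_le_of_lt hs.2 ht.2⟩
    have hep : (0:ℝ) < Real.exp (-(L*s)) := Real.exp_pos _
    by_cases h : u 0 = 0
    · rw [hδdef, if_pos h] at hgs
      apply key s hsT
      have hexp : Real.exp (-(L*t)) ≤ Real.exp (-(L*s)) := by
        apply Real.exp_le_exp.2
        nlinarith [hs.1, hs.2, hL]
      have h1 : u s * Real.exp (-(L*s)) ≤ (15 / (6.5 * ((n:ℝ)^2*A^2))) * Real.exp (-(L*s)) :=
        le_trans hgs (mul_le_mul_of_nonneg_left hexp (by positivity))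
      have hus : u s ≤ 15 / (6.5 * ((n:ℝ)^2*A^2)) := le_of_mul_le_mul_right h1 hep
      have h4 : u s * (6.5 * ((n:ℝ)^2*A^2)) ≤ 15 := by
        rw [← le_div_iff₀ (by positivity)]; exact hus
      nlinarith
    · rw [hδdef, if_neg h] at hgs
      apply key s hsT
      apply hbarrier s hsT
      have h1 := mul_le_mul_of_nonneg_right hgs (Real.exp_pos (L*s)).le
      have h2 : u s * Real.exp (-(L*s)) * Real.exp (L*s) = u s := by
        rw [mul_assoc, ← Real.exp_add]; simp
      rw [h2] at h1
      exact h1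
  -- no crossing of the barrier level δ
  have hbound : ∀ s ∈ Set.Icc (0:ℝ) t, g s < δ := by
    by_contra hcon
    push_neg at hcon
    obtain ⟨s0, hs0, hs0δ⟩ := hcon
    set S := {s | s ∈ Set.Icc (0:ℝ) t ∧ δ ≤ g s} with hSdef
    have hSne : S.Nonempty := ⟨s0, hs0, hs0δ⟩
    have hSclosed : IsClosed S := by
      have hSeq : S = Set.Icc (0:ℝ) t ∩ g ⁻¹' Set.Ici δ := by
        ext x; simp [hSdef, Set.mem_preimage]
      rw [hSeq]
      exact hgc.preimage_isClosed_of_isClosed isClosed_Icc isClosed_Ici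
    have hSbdd : BddBelow S := ⟨0, fun x hx => hx.1.1⟩
    set m := sInf S with hmdef
    have hmS : m ∈ S := hSclosed.csInf_mem hSne hSbdd
    have hm0 : 0 < m := by
      rcases lt_or_eq_of_le hmS.1.1 with hlt | heq
      · exact hlt
      · exfalso
        have := hmS.2
        rw [← heq, hg0] at this
        linarith
    have hmt : m ≤ t := hmS.1.2
    have hanti : AntitoneOn g (Set.Icc 0 m) := by
      apply antitoneOn_of_deriv_nonpos (convex_Icc 0 m)
      · exact hgc.mono (Set.Icc_subset_Icc le_rfl hmt)
      · intro x hx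
        rw [interior_Icc] at hx
        exact ((hgderiv x ⟨hx.1.le, lt_of_le_of_lt (le_trans hx.2.le hmt) ht.2⟩).differentiableAt).differentiableWithinAt
      · intro x hx
        rw [interior_Icc] at hx
        have hxIco : x ∈ Set.Ico (0:ℝ) T := ⟨hx.1.le, lt_of_le_of_lt (le_trans hx.2.le hmt) ht.2⟩
        have hxIcc : x ∈ Set.Icc (0:ℝ) t := ⟨hx.1.le, le_trans hx.2.le hmt⟩
        have hxlt : g x < δ := by
          by_contra hge
          push_neg at hge
          have hxS : x ∈ S := ⟨hxIcc, hge⟩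
          have := csInf_le hSbdd hxS
          rw [← hmdef] at this
          linarith [hx.2]
        have hle : u' x ≤ L * u x := hδsmall x hxIcc hxlt.le
        rw [(hgderiv x hxIco).deriv]
        exact mul_nonpos_of_nonpos_of_nonneg (by linarith) (Real.exp_pos _).le
    have hgm : g m ≤ g 0 := hanti ⟨le_rfl, hm0.le⟩ ⟨hm0.le, le_rfl⟩ hm0.le
    rw [hg0] at hgm
    linarith [hmS.2]
  -- hence g is antitone on all of [0, t]
  have hanti2 : AntitoneOn g (Set.Icc 0 t) := by
    apply antitoneOn_of_deriv_nonpos (convex_Icc 0 t) hgc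
    · intro x hx
      rw [interior_Icc] at hx
      exact ((hgderiv x ⟨hx.1.le, lt_of_le_of_lt hx.2.le ht.2⟩).differentiableAt).differentiableWithinAt
    · intro x hx
      rw [interior_Icc] at hx
      have hxIco : x ∈ Set.Ico (0:ℝ) T := ⟨hx.1.le, lt_of_le_of_lt hx.2.le ht.2⟩
      have hxIcc : x ∈ Set.Icc (0:ℝ) t := ⟨hx.1.le, hx.2.le⟩
      have hle : u' x ≤ L * u x := hδsmall x hxIcc (hbound x hxIcc).le
      rw [(hgderiv x hxIco).deriv]
      exact mul_nonpos_of_nonpos_of_nonneg (by linarith) (Real.exp_pos _).le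
  have hgt : g t ≤ g 0 := hanti2 ⟨le_rfl, ht.1⟩ ⟨ht.1, le_rfl⟩ ht.1
  rw [hg0] at hgt
  have h1 := mul_le_mul_of_nonneg_right hgt (Real.exp_pos (L*t)).le
  have h2 : u t * Real.exp (-(L*t)) * Real.exp (L*t) = u t := by
    rw [mul_assoc, ← Real.exp_add]; simp
  rw [h2] at h1
  exact h1
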